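/- For all n, k ∈ ℕ with 1 ≤ k ≤ n, the family ℱ(n,k) of all k-element subsets S of ℤ_n whose longest run of consecutive elements is strictly longer than the longest run of consecutive non-elements is both symmetric and intersecting: any two members of ℱ(n,k) have nonempty intersection, and the automorphism group of ℱ(n,k) acts transitively on ℤ_n. -/
import Mathlib


open scoped Classical

/-- `S ⊆ ℤ_n` contains a run `{i, i+1, ..., i+l-1}` (arithmetic mod `n`) of length `l`. -/
def HasRun {n : ℕ} (S : Set (ZMod n)) (l : ℕ) : Prop :=
  ∃ i : ZMod n, ∀ t : ℕ, t < l → i + (t : ZMod n) ∈ S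

/-- The maximum length (at most `n`) of a run of consecutive elements of `S ⊆ ℤ_n`. -/
noncomputable def maxRun {n : ℕ} (S : Set (ZMod n)) : ℕ :=
  sSup {l | l ≤ n ∧ HasRun S l}

/-- `ℱ(n,k)`: the family of all `k`-element subsets `S ⊆ ℤ_n` whose longest run of
consecutive elements is strictly longer than the longest run of consecutive
non-elements. -/
def calF (n k : ℕ) : Set (Finset (ZMod n)) :=
  {S | S.card = k ∧ maxRun ((S : Set (ZMod n))ᶜ) < maxRun (S : Set (ZMod n))}

lemma maxRun_mono {n : ℕ} {A B : Set (ZMod n)} (h : A ⊆ B) : maxRun A ≤ maxRun B := by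
  apply csSup_le_csSup
  · exact ⟨n, fun l hl => hl.1⟩
  · exact ⟨0, Nat.zero_le n, 0, fun t ht => absurd ht (Nat.not_lt_zero t)⟩
  · rintro l ⟨hln, i, hi⟩
    exact ⟨hln, i, fun t ht => h (hi t ht)⟩

lemma hasRun_image {n : ℕ} (c : ZMod n) (A : Set (ZMod n)) (l : ℕ) :
    HasRun ((· + c) '' A) l ↔ HasRun A l := by
  constructor
  · rintro ⟨i, hi⟩
    refine ⟨i - c, fun t ht => ?_⟩
    obtain ⟨a, ha, hac⟩ := hi t ht
    have : a = i - c + t := by linear_combination hac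
    rwa [← this]
  · rintro ⟨i, hi⟩
    exact ⟨i + c, fun t ht => ⟨i + t, hi t ht, by ring⟩⟩

lemma maxRun_image {n : ℕ} (c : ZMod n) (A : Set (ZMod n)) :
    maxRun ((· + c) '' A) = maxRun A := by
  unfold maxRun
  congr 1
  ext l
  simp only [Set.mem_setOf_eq, hasRun_image]


/-- For `1 ≤ k ≤ n`, the family `ℱ(n,k)` is intersecting and symmetric. -/
theorem calF_intersecting_and_symmetric (n k : ℕ) (h1 : 1 ≤ k) (h2 : k ≤ n) :
    (∀ S ∈ calF n k, ∀ T ∈ calF n k, (S ∩ T).Nonempty) ∧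
    (∀ i j : ZMod n, ∃ σ : Equiv.Perm (ZMod n),
      (∀ S : Finset (ZMod n), S.image σ ∈ calF n k ↔ S ∈ calF n k) ∧ σ i = j) := by
  constructor
  · intro S hS T hT
    by_contra hST
    rw [Finset.not_nonempty_iff_eq_empty] at hST
    have hd : Disjoint (S : Set (ZMod n)) (T : Set (ZMod n)) :=
      Finset.disjoint_coe.mpr (Finset.disjoint_iff_inter_eq_empty.mpr hST)
    have h1 : (T : Set (ZMod n)) ⊆ (S : Set (ZMod n))ᶜ := hd.symm.subset_compl_right
    have h2' : (S : Set (ZMod n)) ⊆ (T : Set (ZMod n))ᶜ := hd.subset_compl_right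
    have : maxRun (T : Set (ZMod n)) < maxRun (T : Set (ZMod n)) :=
      calc maxRun (T : Set (ZMod n)) ≤ maxRun ((S : Set (ZMod n))ᶜ) := maxRun_mono h1
        _ < maxRun (S : Set (ZMod n)) := hS.2
        _ ≤ maxRun ((T : Set (ZMod n))ᶜ) := maxRun_mono h2'
        _ < maxRun (T : Set (ZMod n)) := hT.2
    exact lt_irrefl _ this
  · intro i j
    refine ⟨Equiv.addRight (j - i), fun S => ?_, by simp⟩
    have hcoe : ((S.image (Equiv.addRight (j - i)) : Finset (ZMod n)) : Set (ZMod n))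
        = (· + (j - i)) '' (S : Set (ZMod n)) := by
      rw [Finset.coe_image]; rfl
    have hcompl : (((· + (j - i)) '' (S : Set (ZMod n)))ᶜ : Set (ZMod n))
        = (· + (j - i)) '' ((S : Set (ZMod n))ᶜ) :=
      (Set.image_compl_eq (Equiv.addRight (j - i)).bijective).symm
    constructor <;> rintro ⟨hcard, hrun⟩
    · refine ⟨?_, ?_⟩
      · rwa [Finset.card_image_of_injective _ (Equiv.injective _)] at hcard
      · rwa [hcoe, hcompl, maxRun_image, maxRun_image] at hrun
    · refine ⟨?_, ?_⟩
      · rwa [Finset.card_image_of_injective _ (Equiv.injective _)]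
      · rwa [hcoe, hcompl, maxRun_image, maxRun_image]
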